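/- Let 0 < θ < 1 and 1 ≤ q ≤ ∞. Then for every measurable g : (0,∞) → [0,∞]: (i) Φ_{θ,q}(t ↦ ∫₀ᵗ g(r)·log(t/r) dr/r) ≤ θ^{−2}·Φ_{θ,q}(g), and (ii) Φ_{θ,q}(t ↦ t·∫_t^∞ g(r)·log(r/t) dr/r²) ≤ (1−θ)^{−2}·Φ_{θ,q}(g). Consequently Φ_{θ,q}(t ↦ ∫₀ᵗ g(r)·log(t/r) dr/r + t·∫_t^∞ g(r)·log(r/t) dr/r²) ≤ (θ^{−2} + (1−θ)^{−2})·Φ_{θ,q}(g). -/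

import Mathlib

open MeasureTheory Set Real Filter ENNReal

/-- The functional `Φ_{θ,q}(g) = (∫₀^∞ (s^{−θ} g(s))^q ds/s)^{1/q}` for `q < ∞`,
and `Φ_{θ,∞}(g) = sup_{s>0} s^{−θ} g(s)`. -/
noncomputable def Phi (θ : ℝ) (q : ℝ≥0∞) (g : ℝ → ℝ≥0∞) : ℝ≥0∞ :=
  if q = ∞ then ⨆ s ∈ Set.Ioi (0 : ℝ), ENNReal.ofReal (s ^ (-θ)) * g s
  else (∫⁻ s in Set.Ioi (0 : ℝ),
    (ENNReal.ofReal (s ^ (-θ)) * g s) ^ q.toReal * ENNReal.ofReal s⁻¹) ^ (1 / q.toReal)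


lemma meas_inv_oR : Measurable fun r : ℝ => ENNReal.ofReal r⁻¹ :=
  measurable_inv.ennreal_ofReal


lemma int_pow_Ioo {a s : ℝ} (ha : 0 < a) (hs : 0 < s) :
    ∫⁻ r in Ioo (0:ℝ) s, ENNReal.ofReal (r ^ (a - 1)) = ENNReal.ofReal (s ^ a / a) := by
  have hint : IntegrableOn (fun r : ℝ => r ^ (a - 1)) (Ioo 0 s) := by
    have := (intervalIntegral.intervalIntegrable_rpow' (a := (0:ℝ)) (b := s) (r := a - 1) (by linarith)).1
    exact this.mono_set Ioo_subset_Ioc_self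
  rw [← ofReal_integral_eq_lintegral_ofReal hint]
  · congr 1
    rw [← integral_Ioc_eq_integral_Ioo, ← intervalIntegral.integral_of_le hs.le,
      integral_rpow (Or.inl (by linarith))]
    rw [Real.zero_rpow (by linarith : a - 1 + 1 ≠ 0), sub_add_cancel, sub_zero]
  · filter_upwards [ae_restrict_mem measurableSet_Ioo] with r hr
    exact Real.rpow_nonneg hr.1.le _

lemma int_pow_Ioi {a s : ℝ} (ha : 0 < a) (hs : 0 < s) :
    ∫⁻ t in Ioi s, ENNReal.ofReal (t ^ (-a - 1)) = ENNReal.ofReal (s ^ (-a) / a) := by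
  have hlt : -a - 1 < -1 := by linarith
  rw [← ofReal_integral_eq_lintegral_ofReal (integrableOn_Ioi_rpow_of_lt hlt hs)]
  · congr 1
    rw [integral_Ioi_rpow_of_lt hlt hs]
    rw [show -a - 1 + 1 = -a by ring]
    rw [neg_div, div_neg, neg_neg]
  · filter_upwards [ae_restrict_mem measurableSet_Ioi] with t ht
    exact Real.rpow_nonneg (hs.trans ht).le _

lemma int_log {r t : ℝ} (hr : 0 < r) (hrt : r < t) :
    ∫⁻ s in Ioo r t, ENNReal.ofReal s⁻¹ = ENNReal.ofReal (Real.log (t / r)) := by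
  have hint : IntegrableOn (fun s : ℝ => s⁻¹) (Ioo r t) := by
    have hc : ContinuousOn (fun s : ℝ => s⁻¹) (Set.uIcc r t) := by
      apply ContinuousOn.inv₀ continuousOn_id
      intro x hx
      rw [Set.uIcc_of_le hrt.le] at hx
      exact (hr.trans_le hx.1).ne'
    exact (hc.intervalIntegrable.1).mono_set Ioo_subset_Ioc_self
  rw [← ofReal_integral_eq_lintegral_ofReal hint]
  · congr 1
    rw [← integral_Ioc_eq_integral_Ioo, ← intervalIntegral.integral_of_le hrt.le,
      integral_inv (Set.notMem_uIcc_of_lt hr (hr.trans hrt))]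
  · filter_upwards [ae_restrict_mem measurableSet_Ioo] with s hs
    exact (inv_pos.2 (hr.trans hs.1)).le



lemma lintegral_swap_lt {S : Set ℝ} (hS : MeasurableSet S) {f g : ℝ → ℝ≥0∞}
    (hf : Measurable f) (hg : Measurable g) :
    ∫⁻ t in S, f t * ∫⁻ s in Iio t ∩ S, g s = ∫⁻ s in S, g s * ∫⁻ t in Ioi s ∩ S, f t := by
  have hmeas : Measurable (Function.uncurry fun t s : ℝ =>
      if s < t then f t * g s else 0) := by
    apply Measurable.ite (measurableSet_lt measurable_snd measurable_fst)
    · exact (hf.comp measurable_fst).mul (hg.comp measurable_snd)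
    · exact measurable_const
  have L : ∀ t : ℝ, f t * ∫⁻ s in Iio t ∩ S, g s
      = ∫⁻ s in S, (if s < t then f t * g s else 0) := by
    intro t
    have : ∀ s : ℝ, (if s < t then f t * g s else 0)
        = (Iio t).indicator (fun s => f t * g s) s := by
      intro s; simp [Set.indicator_apply]
    simp_rw [this]
    rw [lintegral_indicator measurableSet_Iio, Measure.restrict_restrict measurableSet_Iio,
      lintegral_const_mul _ hg]
  have R : ∀ s : ℝ, g s * ∫⁻ t in Ioi s ∩ S, f t
      = ∫⁻ t in S, (if s < t then f t * g s else 0) := by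
    intro s
    have : ∀ t : ℝ, (if s < t then f t * g s else 0)
        = (Ioi s).indicator (fun t => f t * g s) t := by
      intro t; simp [Set.indicator_apply]
    simp_rw [this]
    rw [lintegral_indicator measurableSet_Ioi, Measure.restrict_restrict measurableSet_Ioi,
      lintegral_mul_const _ hf, mul_comm]
  simp_rw [L, R]
  exact lintegral_lintegral_swap hmeas.aemeasurable



lemma meas_rpow_oR (a : ℝ) : Measurable fun r : ℝ => ENNReal.ofReal (r ^ a) :=
  (measurable_id.pow measurable_const).ennreal_ofReal

lemma oR_rpow {x : ℝ} (hx : 0 < x) (a b : ℝ) :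
    ENNReal.ofReal (x ^ a) ^ b = ENNReal.ofReal (x ^ (a * b)) := by
  rw [ENNReal.ofReal_rpow_of_pos (Real.rpow_pos_of_pos hx a), ← Real.rpow_mul hx.le]

lemma oR_mul_rpow {x : ℝ} (hx : 0 < x) (a b : ℝ) :
    ENNReal.ofReal (x ^ a) * ENNReal.ofReal (x ^ b) = ENNReal.ofReal (x ^ (a + b)) := by
  rw [← ENNReal.ofReal_mul (Real.rpow_nonneg hx.le _), ← Real.rpow_add hx]

lemma oR_weight {x : ℝ} (hx : 0 < x) (a : ℝ) :
    ENNReal.ofReal (x ^ a) * ENNReal.ofReal x⁻¹ = ENNReal.ofReal (x ^ (a - 1)) := by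
  rw [← Real.rpow_neg_one x, oR_mul_rpow hx, ← sub_eq_add_neg]

lemma oR_one_mul {x : ℝ} (hx : 0 < x) (a : ℝ) :
    ENNReal.ofReal (x ^ (-a)) * ENNReal.ofReal (x ^ a) = 1 := by
  rw [oR_mul_rpow hx, neg_add_cancel, Real.rpow_zero, ENNReal.ofReal_one]

lemma alg1 {s : ℝ} (hs : 0 < s) (A C : ℝ≥0∞) {p p' θ : ℝ} (hpc : p.HolderConjugate p') :
    (ENNReal.ofReal (s ^ (-θ)) * (A ^ (1/p) * (ENNReal.ofReal (s ^ θ) * C) ^ (1/p'))) ^ p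
      * ENNReal.ofReal s⁻¹
    = C ^ (p - 1) * (A * ENNReal.ofReal (s ^ (-θ - 1))) := by
  have hp0 : 0 < p := hpc.pos
  have hpne : p ≠ 0 := hp0.ne'
  have hp'0 : 0 < p' := hpc.symm.pos
  have hdiv : 1/p' * p = p - 1 := by
    rw [one_div, mul_comm, ← div_eq_mul_inv]; exact hpc.div_conj_eq_sub_one
  rw [ENNReal.mul_rpow_of_nonneg _ _ (by positivity : (0:ℝ) ≤ 1/p'),
    ENNReal.mul_rpow_of_nonneg _ _ hp0.le, ENNReal.mul_rpow_of_nonneg _ _ hp0.le,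
    ENNReal.mul_rpow_of_nonneg _ _ hp0.le,
    ← ENNReal.rpow_mul A, one_div_mul_cancel hpne, ENNReal.rpow_one,
    ← ENNReal.rpow_mul (ENNReal.ofReal (s ^ θ)), hdiv,
    ← ENNReal.rpow_mul C, hdiv,
    oR_rpow hs, oR_rpow hs]
  calc ENNReal.ofReal (s ^ (-θ * p)) * (A * (ENNReal.ofReal (s ^ (θ * (p - 1))) * C ^ (p-1)))
        * ENNReal.ofReal s⁻¹
      = C ^ (p-1) * (A * (ENNReal.ofReal (s ^ (-θ * p)) * ENNReal.ofReal (s ^ (θ * (p-1)))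
          * ENNReal.ofReal s⁻¹)) := by ring
    _ = C ^ (p - 1) * (A * ENNReal.ofReal (s ^ (-θ - 1))) := by
        rw [oR_mul_rpow hs, show -θ * p + θ * (p - 1) = -θ by ring, oR_weight hs,
          show -θ - 1 = -θ - 1 from rfl]

lemma int_A {a t : ℝ} (ha : 0 < a) (ht : 0 < t) :
    ∫⁻ r in Ioo (0:ℝ) t, ENNReal.ofReal (r ^ (a - 1)) * ENNReal.ofReal (Real.log (t / r))
      = ENNReal.ofReal (t ^ a / a ^ 2) := by
  have step1 : ∫⁻ r in Ioo (0:ℝ) t, ENNReal.ofReal (r ^ (a - 1)) * ENNReal.ofReal (Real.log (t / r))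
      = ∫⁻ r in Ioo (0:ℝ) t, ENNReal.ofReal (r ^ (a - 1)) *
          ∫⁻ s in Ioi r ∩ Ioo (0:ℝ) t, ENNReal.ofReal s⁻¹ := by
    apply setLIntegral_congr_fun_ae measurableSet_Ioo
    filter_upwards with r hr
    have hset : Ioi r ∩ Ioo (0:ℝ) t = Ioo r t := by
      ext x
      simp only [mem_inter_iff, mem_Ioi, mem_Ioo]
      exact ⟨fun ⟨h1, h2⟩ => ⟨h1, h2.2⟩, fun ⟨h1, h2⟩ => ⟨h1, hr.1.trans h1, h2⟩⟩
    rw [hset, int_log hr.1 hr.2]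
  rw [step1, (lintegral_swap_lt measurableSet_Ioo meas_inv_oR (meas_rpow_oR (a-1))).symm]
  have step2 : ∫⁻ s in Ioo (0:ℝ) t, ENNReal.ofReal s⁻¹ *
      ∫⁻ r in Iio s ∩ Ioo (0:ℝ) t, ENNReal.ofReal (r ^ (a - 1))
      = ∫⁻ s in Ioo (0:ℝ) t, ENNReal.ofReal (s ^ (a - 1)) * ENNReal.ofReal a⁻¹ := by
    apply setLIntegral_congr_fun_ae measurableSet_Ioo
    filter_upwards with s hs
    have hset : Iio s ∩ Ioo (0:ℝ) t = Ioo 0 s := by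
      ext x
      simp only [mem_inter_iff, mem_Iio, mem_Ioo]
      exact ⟨fun ⟨h1, h2⟩ => ⟨h2.1, h1⟩, fun ⟨h1, h2⟩ => ⟨h2, h1, h2.trans hs.2⟩⟩
    rw [hset, int_pow_Ioo ha hs.1, ← ENNReal.ofReal_mul (inv_pos.2 hs.1).le]
    rw [← ENNReal.ofReal_mul (Real.rpow_nonneg hs.1.le _)]
    congr 1
    rw [Real.rpow_sub hs.1, Real.rpow_one]
    field_simp
  rw [step2, lintegral_mul_const _ (meas_rpow_oR (a-1)), int_pow_Ioo ha ht,
    ← ENNReal.ofReal_mul (by positivity)]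
  congr 1
  rw [sq]
  field_simp

lemma int_B {a r : ℝ} (ha : 0 < a) (hr : 0 < r) :
    ∫⁻ t in Ioi r, ENNReal.ofReal (t ^ (-a - 1)) * ENNReal.ofReal (Real.log (t / r))
      = ENNReal.ofReal (r ^ (-a) / a ^ 2) := by
  have step1 : ∫⁻ t in Ioi r, ENNReal.ofReal (t ^ (-a - 1)) * ENNReal.ofReal (Real.log (t / r))
      = ∫⁻ t in Ioi r, ENNReal.ofReal (t ^ (-a - 1)) *
          ∫⁻ s in Iio t ∩ Ioi r, ENNReal.ofReal s⁻¹ := by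
    apply setLIntegral_congr_fun_ae measurableSet_Ioi
    filter_upwards with t ht
    rw [Set.Iio_inter_Ioi, int_log hr ht]
  rw [step1, lintegral_swap_lt measurableSet_Ioi (meas_rpow_oR (-a-1)) meas_inv_oR]
  have step2 : ∫⁻ s in Ioi r, ENNReal.ofReal s⁻¹ *
      ∫⁻ t in Ioi s ∩ Ioi r, ENNReal.ofReal (t ^ (-a - 1))
      = ∫⁻ s in Ioi r, ENNReal.ofReal (s ^ (-a - 1)) * ENNReal.ofReal a⁻¹ := by
    apply setLIntegral_congr_fun_ae measurableSet_Ioi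
    filter_upwards with s hs
    have hset : Ioi s ∩ Ioi r = Ioi s := inter_eq_left.2 (Ioi_subset_Ioi hs.le)
    have hs0 : 0 < s := hr.trans hs
    rw [hset, int_pow_Ioi ha hs0, ← ENNReal.ofReal_mul (inv_pos.2 hs0).le,
      ← ENNReal.ofReal_mul (Real.rpow_nonneg hs0.le _)]
    congr 1
    rw [Real.rpow_sub hs0, Real.rpow_one]
    field_simp
  rw [step2, lintegral_mul_const _ (meas_rpow_oR (-a-1)), int_pow_Ioi ha hr,
    ← ENNReal.ofReal_mul (by positivity)]
  congr 1
  rw [sq]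
  field_simp

lemma key (θ : ℝ) (q : ℝ≥0∞) (hθ0 : 0 < θ) (hq : 1 ≤ q) {g : ℝ → ℝ≥0∞} (hg : Measurable g)
    {k : ℝ → ℝ → ℝ≥0∞} (hk : Measurable (Function.uncurry k)) (c : ℝ)
    (H1 : ∀ t ∈ Ioi (0:ℝ), ∫⁻ r in Ioi (0:ℝ), k t r * ENNReal.ofReal (r ^ θ)
        = ENNReal.ofReal (t ^ θ) * ENNReal.ofReal c)
    (H2 : ∀ r ∈ Ioi (0:ℝ), ∫⁻ t in Ioi (0:ℝ), k t r * ENNReal.ofReal (t ^ (-θ - 1))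
        = ENNReal.ofReal (r ^ (-θ - 1)) * ENNReal.ofReal c) :
    Phi θ q (fun t => ∫⁻ r in Ioi (0:ℝ), k t r * g r) ≤ ENNReal.ofReal c * Phi θ q g := by
  have hk1 : ∀ t, Measurable fun r => k t r := fun t => hk.of_uncurry_left
  have hk2 : ∀ r, Measurable fun t => k t r := fun r => hk.of_uncurry_right
  by_cases hqi : q = ∞
  · simp only [Phi, if_pos hqi]
    refine iSup₂_le fun t ht => ?_
    set M := ⨆ s ∈ Ioi (0:ℝ), ENNReal.ofReal (s ^ (-θ)) * g s with hM
    have ht0 : (0:ℝ) < t := ht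
    have hgb : ∀ r ∈ Ioi (0:ℝ), g r ≤ ENNReal.ofReal (r ^ θ) * M := by
      intro r hr
      have hr0 : (0:ℝ) < r := hr
      have h1 : ENNReal.ofReal (r ^ (-θ)) * g r ≤ M :=
        le_biSup (fun s => ENNReal.ofReal (s ^ (-θ)) * g s) hr
      calc g r = ENNReal.ofReal (r ^ θ) * (ENNReal.ofReal (r ^ (-θ)) * g r) := by
            rw [← mul_assoc, mul_comm (ENNReal.ofReal (r ^ θ)), oR_one_mul hr0, one_mul]
        _ ≤ ENNReal.ofReal (r ^ θ) * M := mul_le_mul_right h1 _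
    calc ENNReal.ofReal (t ^ (-θ)) * ∫⁻ r in Ioi (0:ℝ), k t r * g r
        ≤ ENNReal.ofReal (t ^ (-θ)) *
          ∫⁻ r in Ioi (0:ℝ), k t r * (ENNReal.ofReal (r ^ θ) * M) := by
          refine mul_le_mul_right ?_ _
          refine setLIntegral_mono ((hk1 t).mul ((meas_rpow_oR θ).mul_const M)) fun r hr => ?_
          exact mul_le_mul_right (hgb r hr) _
      _ = ENNReal.ofReal (t ^ (-θ)) *
          ((∫⁻ r in Ioi (0:ℝ), k t r * ENNReal.ofReal (r ^ θ)) * M) := by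
          rw [← lintegral_mul_const _ ((hk1 t).fun_mul (meas_rpow_oR θ))]
          simp_rw [mul_assoc]
      _ = ENNReal.ofReal (t ^ (-θ)) * (ENNReal.ofReal (t ^ θ) * ENNReal.ofReal c * M) := by
          rw [H1 t ht]
      _ = ENNReal.ofReal c * M := by
          rw [← mul_assoc, ← mul_assoc, oR_one_mul ht0, one_mul]
  -- finite exponent case
  · simp only [Phi, if_neg hqi]
    set p := q.toReal with hp
    have hp1 : 1 ≤ p := by
      rw [hp, ← ENNReal.toReal_one]
      exact ENNReal.toReal_mono hqi hq
    have hp0 : 0 < p := lt_of_lt_of_le one_pos hp1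
    have hpne : p ≠ 0 := hp0.ne'
    have fub : ∀ h : ℝ → ℝ≥0∞, Measurable h →
        (∫⁻ t in Ioi (0:ℝ), (∫⁻ r in Ioi (0:ℝ), k t r * h r) * ENNReal.ofReal (t ^ (-θ - 1)))
          = ENNReal.ofReal c * ∫⁻ r in Ioi (0:ℝ), h r * ENNReal.ofReal (r ^ (-θ - 1)) := by
      intro h hh
      have e1 : ∀ t : ℝ, (∫⁻ r in Ioi (0:ℝ), k t r * h r) * ENNReal.ofReal (t ^ (-θ - 1))
          = ∫⁻ r in Ioi (0:ℝ), k t r * h r * ENNReal.ofReal (t ^ (-θ - 1)) :=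
        fun t => (lintegral_mul_const _ ((hk1 t).mul hh)).symm
      simp_rw [e1]
      have hmeas : AEMeasurable
          (Function.uncurry fun t r : ℝ => k t r * h r * ENNReal.ofReal (t ^ (-θ - 1)))
          ((volume.restrict (Ioi (0:ℝ))).prod (volume.restrict (Ioi (0:ℝ)))) := by
        have : Function.uncurry (fun t r : ℝ => k t r * h r * ENNReal.ofReal (t ^ (-θ - 1)))
            = fun z : ℝ × ℝ => Function.uncurry k z * h z.2
              * ENNReal.ofReal (z.1 ^ (-θ - 1)) := rfl
        rw [this]
        exact ((hk.mul (hh.comp measurable_snd)).mul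
          ((meas_rpow_oR (-θ-1)).comp measurable_fst)).aemeasurable
      rw [lintegral_lintegral_swap hmeas]
      have e2 : ∀ r ∈ Ioi (0:ℝ),
          (∫⁻ t in Ioi (0:ℝ), k t r * h r * ENNReal.ofReal (t ^ (-θ - 1)))
          = ENNReal.ofReal c * (h r * ENNReal.ofReal (r ^ (-θ - 1))) := by
        intro r hr
        have : ∀ t : ℝ, k t r * h r * ENNReal.ofReal (t ^ (-θ - 1))
            = h r * (k t r * ENNReal.ofReal (t ^ (-θ - 1))) := fun t => by ring
        simp_rw [this]
        rw [lintegral_const_mul _ ((hk2 r).fun_mul (meas_rpow_oR (-θ-1))), H2 r hr]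
        ring
      rw [setLIntegral_congr_fun_ae measurableSet_Ioi (ae_of_all _ e2),
        lintegral_const_mul _ (hh.fun_mul (meas_rpow_oR (-θ-1)))]
    suffices core : ∫⁻ s in Ioi (0:ℝ),
        (ENNReal.ofReal (s ^ (-θ)) * ∫⁻ r in Ioi (0:ℝ), k s r * g r) ^ p
          * ENNReal.ofReal s⁻¹
        ≤ ENNReal.ofReal c ^ p *
          ∫⁻ s in Ioi (0:ℝ), (ENNReal.ofReal (s ^ (-θ)) * g s) ^ p * ENNReal.ofReal s⁻¹ by
      calc (∫⁻ s in Ioi (0:ℝ), (ENNReal.ofReal (s ^ (-θ)) *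
              ∫⁻ r in Ioi (0:ℝ), k s r * g r) ^ p * ENNReal.ofReal s⁻¹) ^ (1/p)
          ≤ (ENNReal.ofReal c ^ p *
            ∫⁻ s in Ioi (0:ℝ), (ENNReal.ofReal (s ^ (-θ)) * g s) ^ p
              * ENNReal.ofReal s⁻¹) ^ (1/p) :=
            ENNReal.rpow_le_rpow core (by positivity)
        _ = ENNReal.ofReal c *
            (∫⁻ s in Ioi (0:ℝ), (ENNReal.ofReal (s ^ (-θ)) * g s) ^ p
              * ENNReal.ofReal s⁻¹) ^ (1/p) := by
            rw [ENNReal.mul_rpow_of_nonneg _ _ (by positivity : (0:ℝ) ≤ 1/p),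
              ← ENNReal.rpow_mul, mul_one_div, div_self hpne, ENNReal.rpow_one]

    by_cases hp1' : p = 1
    · rw [hp1']
      simp only [ENNReal.rpow_one]
      have l1 : ∫⁻ s in Ioi (0:ℝ),
          (ENNReal.ofReal (s ^ (-θ)) * ∫⁻ r in Ioi (0:ℝ), k s r * g r) * ENNReal.ofReal s⁻¹
          = ∫⁻ s in Ioi (0:ℝ), (∫⁻ r in Ioi (0:ℝ), k s r * g r)
              * ENNReal.ofReal (s ^ (-θ - 1)) := by
        apply setLIntegral_congr_fun_ae measurableSet_Ioi
        filter_upwards with s hs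
        rw [mul_comm (ENNReal.ofReal (s ^ (-θ))), mul_assoc, oR_weight hs]
      rw [l1, fub g hg]
      refine le_of_eq ?_
      congr 1
      apply setLIntegral_congr_fun_ae measurableSet_Ioi
      filter_upwards with s hs
      rw [mul_comm (ENNReal.ofReal (s ^ (-θ))), mul_assoc, oR_weight hs]
    · have hplt : 1 < p := lt_of_le_of_ne hp1 (Ne.symm hp1')
      set p' := Real.conjExponent p with hp'def
      have hpc : p.HolderConjugate p' := Real.HolderConjugate.conjExponent hplt
      have hp'0 : 0 < p' := hpc.symm.pos
      have hp'ne : p' ≠ 0 := hp'0.ne'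
      have hsum : 1/p + 1/p' = 1 := by
        rw [one_div, one_div]; exact hpc.inv_add_inv_eq_one
      have hYm : Measurable fun r : ℝ => g r ^ p * ENNReal.ofReal (r ^ (-θ * (p - 1))) :=
        (hg.pow measurable_const).mul (meas_rpow_oR _)
      have hI : Measurable fun s : ℝ =>
          ∫⁻ r in Ioi (0:ℝ), k s r * (g r ^ p * ENNReal.ofReal (r ^ (-θ * (p - 1)))) := by
        apply Measurable.lintegral_prod_right
        have : Function.uncurry
            (fun s r : ℝ => k s r * (g r ^ p * ENNReal.ofReal (r ^ (-θ * (p - 1)))))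
            = fun z : ℝ × ℝ => Function.uncurry k z
              * (g z.2 ^ p * ENNReal.ofReal (z.2 ^ (-θ * (p - 1)))) := rfl
        rw [this]
        exact hk.mul (hYm.comp measurable_snd)
      have holder : ∀ t ∈ Ioi (0:ℝ), (∫⁻ r in Ioi (0:ℝ), k t r * g r)
          ≤ (∫⁻ r in Ioi (0:ℝ), k t r * (g r ^ p * ENNReal.ofReal (r ^ (-θ * (p - 1))))) ^ (1/p)
            * (ENNReal.ofReal (t ^ θ) * ENNReal.ofReal c) ^ (1/p') := by
        intro t ht
        set F := fun r : ℝ =>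
          (k t r * (g r ^ p * ENNReal.ofReal (r ^ (-θ * (p - 1))))) ^ (1/p) with hF
        set G := fun r : ℝ => (k t r * ENNReal.ofReal (r ^ θ)) ^ (1/p') with hG
        have hFm : Measurable F := ((hk1 t).mul hYm).pow measurable_const
        have hGm : Measurable G := ((hk1 t).mul (meas_rpow_oR θ)).pow measurable_const
        have heq : ∀ r ∈ Ioi (0:ℝ), k t r * g r = (F * G) r := by
          intro r hr
          have hr0 : (0:ℝ) < r := hr
          simp only [hF, hG, Pi.mul_apply]
          rw [ENNReal.mul_rpow_of_nonneg _ _ (by positivity : (0:ℝ) ≤ 1/p),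
            ENNReal.mul_rpow_of_nonneg _ _ (by positivity : (0:ℝ) ≤ 1/p),
            ENNReal.mul_rpow_of_nonneg _ _ (by positivity : (0:ℝ) ≤ 1/p'),
            ← ENNReal.rpow_mul (g r), mul_one_div, div_self hpne, ENNReal.rpow_one,
            oR_rpow hr0, oR_rpow hr0]
          calc k t r * g r
              = (k t r ^ (1/p) * k t r ^ (1/p')) * g r
                * (ENNReal.ofReal (r ^ (-θ * (p - 1) * (1/p)))
                  * ENNReal.ofReal (r ^ (θ * (1/p')))) := by
                rw [← ENNReal.rpow_add_of_nonneg _ _ (by positivity) (by positivity), hsum,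
                  ENNReal.rpow_one, oR_mul_rpow hr0,
                  show -θ * (p - 1) * (1/p) + θ * (1/p') = 0 by
                    have h1 : 1/p' = 1 - 1/p := by linarith
                    rw [h1]; field_simp; ring,
                  Real.rpow_zero, ENNReal.ofReal_one, mul_one]
            _ = k t r ^ (1/p) * (g r * ENNReal.ofReal (r ^ (-θ * (p - 1) * (1/p))))
                * (k t r ^ (1/p') * ENNReal.ofReal (r ^ (θ * (1/p')))) := by ring
        rw [setLIntegral_congr_fun_ae measurableSet_Ioi (ae_of_all _ heq)]
        have hH := ENNReal.lintegral_mul_le_Lp_mul_Lq (volume.restrict (Ioi (0:ℝ))) hpc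
          hFm.aemeasurable hGm.aemeasurable
        have eqF : ∫⁻ r in Ioi (0:ℝ), F r ^ p
            = ∫⁻ r in Ioi (0:ℝ), k t r * (g r ^ p * ENNReal.ofReal (r ^ (-θ * (p - 1)))) := by
          apply lintegral_congr fun r => ?_
          simp only [hF]
          rw [← ENNReal.rpow_mul, one_div_mul_cancel hpne, ENNReal.rpow_one]
        have eqG : ∫⁻ r in Ioi (0:ℝ), G r ^ p'
            = ENNReal.ofReal (t ^ θ) * ENNReal.ofReal c := by
          rw [← H1 t ht]
          apply lintegral_congr fun r => ?_
          simp only [hG]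
          rw [← ENNReal.rpow_mul, one_div_mul_cancel hp'ne, ENNReal.rpow_one]
        rw [eqF, eqG] at hH
        exact hH
      calc ∫⁻ s in Ioi (0:ℝ),
            (ENNReal.ofReal (s ^ (-θ)) * ∫⁻ r in Ioi (0:ℝ), k s r * g r) ^ p
              * ENNReal.ofReal s⁻¹
          ≤ ∫⁻ s in Ioi (0:ℝ), (ENNReal.ofReal (s ^ (-θ)) *
              ((∫⁻ r in Ioi (0:ℝ), k s r * (g r ^ p * ENNReal.ofReal (r ^ (-θ * (p - 1))))) ^ (1/p)
               * (ENNReal.ofReal (s ^ θ) * ENNReal.ofReal c) ^ (1/p'))) ^ p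
              * ENNReal.ofReal s⁻¹ := by
            refine setLIntegral_mono_ae ?_ (ae_of_all _ fun s hs => ?_)
            · exact ((((meas_rpow_oR (-θ)).mul ((hI.pow measurable_const).mul
                (((meas_rpow_oR θ).mul_const _).pow measurable_const))).pow
                measurable_const).mul measurable_inv.ennreal_ofReal).aemeasurable
            · exact mul_le_mul_left
                (ENNReal.rpow_le_rpow (mul_le_mul_right (holder s hs) _) hp0.le) _
        _ = ENNReal.ofReal c ^ (p - 1) *
            ∫⁻ s in Ioi (0:ℝ),
              (∫⁻ r in Ioi (0:ℝ), k s r * (g r ^ p * ENNReal.ofReal (r ^ (-θ * (p - 1)))))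
                * ENNReal.ofReal (s ^ (-θ - 1)) := by
            rw [← lintegral_const_mul _ (hI.fun_mul (meas_rpow_oR (-θ - 1)))]
            apply setLIntegral_congr_fun_ae measurableSet_Ioi
            filter_upwards with s hs
            exact alg1 hs _ _ hpc
        _ = ENNReal.ofReal c ^ (p - 1) * (ENNReal.ofReal c *
              ∫⁻ r in Ioi (0:ℝ), (g r ^ p * ENNReal.ofReal (r ^ (-θ * (p - 1))))
                * ENNReal.ofReal (r ^ (-θ - 1))) := by
            rw [fub _ hYm]
        _ = ENNReal.ofReal c ^ p *
            ∫⁻ s in Ioi (0:ℝ), (ENNReal.ofReal (s ^ (-θ)) * g s) ^ p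
              * ENNReal.ofReal s⁻¹ := by
            rw [← mul_assoc]
            congr 1
            · nth_rewrite 2 [← ENNReal.rpow_one (ENNReal.ofReal c)]
              rw [← ENNReal.rpow_add_of_nonneg _ _ (by linarith) zero_le_one, sub_add_cancel]
            · apply setLIntegral_congr_fun_ae measurableSet_Ioi
              filter_upwards with r hr
              rw [mul_assoc, oR_mul_rpow hr, show -θ * (p - 1) + (-θ - 1) = -θ * p - 1 by ring,
                ENNReal.mul_rpow_of_nonneg _ _ hp0.le, oR_rpow hr,
                show ENNReal.ofReal (r ^ (-θ * p)) * g r ^ p * ENNReal.ofReal r⁻¹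
                  = g r ^ p * (ENNReal.ofReal (r ^ (-θ * p)) * ENNReal.ofReal r⁻¹) by ring,
                oR_weight hr]

lemma Phi_congr {θ : ℝ} {q : ℝ≥0∞} {f h : ℝ → ℝ≥0∞} (e : ∀ s ∈ Ioi (0:ℝ), f s = h s) :
    Phi θ q f = Phi θ q h := by
  unfold Phi
  split
  · exact iSup_congr fun s => iSup_congr fun hs => by rw [e s hs]
  · congr 1
    apply setLIntegral_congr_fun_ae measurableSet_Ioi
    filter_upwards with s hs
    rw [e s hs]

noncomputable def k1 (t r : ℝ) : ℝ≥0∞ :=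
  (Ioo (0:ℝ) t).indicator
    (fun r => ENNReal.ofReal (Real.log (t / r)) * ENNReal.ofReal r⁻¹) r

noncomputable def k2 (t r : ℝ) : ℝ≥0∞ :=
  (Ioi t).indicator (fun r => ENNReal.ofReal t *
    (ENNReal.ofReal (Real.log (r / t)) * ENNReal.ofReal (r ^ 2)⁻¹)) r

lemma k1_meas : Measurable (Function.uncurry k1) := by
  have h : Function.uncurry k1 = fun z : ℝ × ℝ =>
      {w : ℝ × ℝ | 0 < w.2 ∧ w.2 < w.1}.indicator
        (fun w => ENNReal.ofReal (Real.log (w.1 / w.2)) * ENNReal.ofReal w.2⁻¹) z := by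
    funext z
    simp only [Function.uncurry, k1, Set.indicator_apply, mem_Ioo, mem_setOf_eq]
  rw [h]
  apply Measurable.indicator
  · exact ((Real.measurable_log.comp (measurable_fst.div measurable_snd)).ennreal_ofReal).mul
      measurable_snd.inv.ennreal_ofReal
  · exact (measurableSet_lt measurable_const measurable_snd).inter
      (measurableSet_lt measurable_snd measurable_fst)

lemma k2_meas : Measurable (Function.uncurry k2) := by
  have h : Function.uncurry k2 = fun z : ℝ × ℝ =>
      {w : ℝ × ℝ | w.1 < w.2}.indicator
        (fun w => ENNReal.ofReal w.1 *
          (ENNReal.ofReal (Real.log (w.2 / w.1)) * ENNReal.ofReal (w.2 ^ 2)⁻¹)) z := by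
    funext z
    simp only [Function.uncurry, k2, Set.indicator_apply, mem_Ioi, mem_setOf_eq]
  rw [h]
  apply Measurable.indicator
  · exact (measurable_fst.ennreal_ofReal).mul
      (((Real.measurable_log.comp (measurable_snd.div measurable_fst)).ennreal_ofReal).mul
        ((measurable_snd.pow_const 2).inv.ennreal_ofReal))
  · exact measurableSet_lt measurable_fst measurable_snd

lemma k1_apply (t : ℝ) (f : ℝ → ℝ≥0∞) :
    ∫⁻ r in Ioi (0:ℝ), k1 t r * f r
      = ∫⁻ r in Ioo (0:ℝ) t,
          ENNReal.ofReal (Real.log (t / r)) * ENNReal.ofReal r⁻¹ * f r := by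
  have e : ∀ r : ℝ, k1 t r * f r = (Ioo (0:ℝ) t).indicator
      (fun r => ENNReal.ofReal (Real.log (t / r)) * ENNReal.ofReal r⁻¹ * f r) r := by
    intro r
    by_cases h : r ∈ Ioo (0:ℝ) t
    · simp [k1, Set.indicator_of_mem h]
    · simp [k1, Set.indicator_of_notMem h]
  simp_rw [e]
  rw [lintegral_indicator measurableSet_Ioo, Measure.restrict_restrict measurableSet_Ioo,
    inter_eq_left.2 (fun x hx => hx.1)]

lemma k2_apply {t : ℝ} (ht : (0:ℝ) < t) (f : ℝ → ℝ≥0∞) :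
    ∫⁻ r in Ioi (0:ℝ), k2 t r * f r
      = ∫⁻ r in Ioi t, ENNReal.ofReal t *
          (ENNReal.ofReal (Real.log (r / t)) * ENNReal.ofReal (r ^ 2)⁻¹) * f r := by
  have e : ∀ r : ℝ, k2 t r * f r = (Ioi t).indicator
      (fun r => ENNReal.ofReal t *
        (ENNReal.ofReal (Real.log (r / t)) * ENNReal.ofReal (r ^ 2)⁻¹) * f r) r := by
    intro r
    by_cases h : r ∈ Ioi t
    · simp [k2, Set.indicator_of_mem h]
    · simp [k2, Set.indicator_of_notMem h]
  simp_rw [e]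
  rw [lintegral_indicator measurableSet_Ioi, Measure.restrict_restrict measurableSet_Ioi,
    inter_eq_left.2 (Ioi_subset_Ioi ht.le)]

lemma oR_sq_inv {r : ℝ} (hr : 0 < r) :
    ENNReal.ofReal (r ^ 2)⁻¹ = ENNReal.ofReal (r ^ ((-2):ℝ)) := by
  congr 1
  rw [← Real.rpow_natCast r 2, ← Real.rpow_neg hr.le]
  norm_num

lemma H1k1 {θ : ℝ} (hθ0 : 0 < θ) : ∀ t ∈ Ioi (0:ℝ),
    ∫⁻ r in Ioi (0:ℝ), k1 t r * ENNReal.ofReal (r ^ θ)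
      = ENNReal.ofReal (t ^ θ) * ENNReal.ofReal ((θ ^ 2)⁻¹) := by
  intro t ht
  rw [k1_apply]
  have e : ∀ᵐ r ∂volume, r ∈ Ioo (0:ℝ) t →
      ENNReal.ofReal (Real.log (t / r)) * ENNReal.ofReal r⁻¹ * ENNReal.ofReal (r ^ θ)
        = ENNReal.ofReal (r ^ (θ - 1)) * ENNReal.ofReal (Real.log (t / r)) := by
    filter_upwards with r hr
    rw [show ENNReal.ofReal (Real.log (t / r)) * ENNReal.ofReal r⁻¹ * ENNReal.ofReal (r ^ θ)
        = ENNReal.ofReal (r ^ θ) * ENNReal.ofReal r⁻¹ * ENNReal.ofReal (Real.log (t / r))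
        by ring, oR_weight hr.1]
  rw [setLIntegral_congr_fun_ae measurableSet_Ioo e, int_A hθ0 ht, div_eq_mul_inv,
    ENNReal.ofReal_mul (Real.rpow_nonneg ht.le _)]

lemma H2k1 {θ : ℝ} (hθ0 : 0 < θ) : ∀ r ∈ Ioi (0:ℝ),
    ∫⁻ t in Ioi (0:ℝ), k1 t r * ENNReal.ofReal (t ^ (-θ - 1))
      = ENNReal.ofReal (r ^ (-θ - 1)) * ENNReal.ofReal ((θ ^ 2)⁻¹) := by
  intro r hr
  have hr0 : (0:ℝ) < r := hr
  have e : ∀ᵐ t ∂volume, t ∈ Ioi (0:ℝ) →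
      k1 t r * ENNReal.ofReal (t ^ (-θ - 1))
        = (Ioi r).indicator (fun t => ENNReal.ofReal r⁻¹ *
            (ENNReal.ofReal (t ^ (-θ - 1)) * ENNReal.ofReal (Real.log (t / r)))) t := by
    filter_upwards with t ht
    by_cases h : r < t
    · rw [Set.indicator_of_mem (Set.mem_Ioi.2 h), k1,
        Set.indicator_of_mem (Set.mem_Ioo.2 ⟨hr0, h⟩)]
      ring
    · rw [Set.indicator_of_notMem (by simpa using h), k1,
        Set.indicator_of_notMem (fun hc => h hc.2), zero_mul]
  have hm : Measurable fun t : ℝ =>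
      ENNReal.ofReal (t ^ (-θ - 1)) * ENNReal.ofReal (Real.log (t / r)) :=
    (meas_rpow_oR _).mul ((Real.measurable_log.comp (measurable_id.div_const r)).ennreal_ofReal)
  rw [setLIntegral_congr_fun_ae measurableSet_Ioi e, lintegral_indicator measurableSet_Ioi,
    Measure.restrict_restrict measurableSet_Ioi, inter_eq_left.2 (Ioi_subset_Ioi hr0.le),
    lintegral_const_mul _ hm, int_B hθ0 hr0, div_eq_mul_inv, ENNReal.ofReal_mul (Real.rpow_nonneg hr0.le _),
    ← mul_assoc, mul_comm (ENNReal.ofReal r⁻¹), oR_weight hr0]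

lemma H1k2 {θ : ℝ} (hθ1 : θ < 1) : ∀ t ∈ Ioi (0:ℝ),
    ∫⁻ r in Ioi (0:ℝ), k2 t r * ENNReal.ofReal (r ^ θ)
      = ENNReal.ofReal (t ^ θ) * ENNReal.ofReal (((1 - θ) ^ 2)⁻¹) := by
  intro t ht
  have ht0 : (0:ℝ) < t := ht
  rw [k2_apply ht0]
  have e : ∀ᵐ r ∂volume, r ∈ Ioi t →
      ENNReal.ofReal t * (ENNReal.ofReal (Real.log (r / t)) * ENNReal.ofReal (r ^ 2)⁻¹)
          * ENNReal.ofReal (r ^ θ)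
        = ENNReal.ofReal t *
            (ENNReal.ofReal (r ^ (-(1 - θ) - 1)) * ENNReal.ofReal (Real.log (r / t))) := by
    filter_upwards with r hrt
    have hr0 : (0:ℝ) < r := ht0.trans hrt
    rw [oR_sq_inv hr0,
      show ENNReal.ofReal t * (ENNReal.ofReal (Real.log (r / t))
          * ENNReal.ofReal (r ^ ((-2):ℝ))) * ENNReal.ofReal (r ^ θ)
        = ENNReal.ofReal t * (ENNReal.ofReal (r ^ ((-2):ℝ)) * ENNReal.ofReal (r ^ θ)
          * ENNReal.ofReal (Real.log (r / t))) by ring,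
      oR_mul_rpow hr0, show (-2:ℝ) + θ = -(1 - θ) - 1 by ring]
  have hm : Measurable fun r : ℝ =>
      ENNReal.ofReal (r ^ (-(1 - θ) - 1)) * ENNReal.ofReal (Real.log (r / t)) :=
    (meas_rpow_oR _).mul ((Real.measurable_log.comp (measurable_id.div_const t)).ennreal_ofReal)
  rw [setLIntegral_congr_fun_ae measurableSet_Ioi e,
    lintegral_const_mul _ hm, int_B (by linarith : (0:ℝ) < 1 - θ) ht0, div_eq_mul_inv,
    ENNReal.ofReal_mul (Real.rpow_nonneg ht0.le _), ← mul_assoc,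
    show ENNReal.ofReal t = ENNReal.ofReal (t ^ (1:ℝ)) by rw [Real.rpow_one],
    oR_mul_rpow ht0, show (1:ℝ) + -(1 - θ) = θ by ring]

lemma H2k2 {θ : ℝ} (hθ1 : θ < 1) : ∀ r ∈ Ioi (0:ℝ),
    ∫⁻ t in Ioi (0:ℝ), k2 t r * ENNReal.ofReal (t ^ (-θ - 1))
      = ENNReal.ofReal (r ^ (-θ - 1)) * ENNReal.ofReal (((1 - θ) ^ 2)⁻¹) := by
  intro r hr
  have hr0 : (0:ℝ) < r := hr
  have e : ∀ᵐ t ∂volume, t ∈ Ioi (0:ℝ) →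
      k2 t r * ENNReal.ofReal (t ^ (-θ - 1))
        = (Iio r).indicator (fun t => ENNReal.ofReal (r ^ 2)⁻¹ *
            (ENNReal.ofReal (t ^ ((1 - θ) - 1)) * ENNReal.ofReal (Real.log (r / t)))) t := by
    filter_upwards with t ht
    have ht0 : (0:ℝ) < t := ht
    by_cases h : t < r
    · rw [Set.indicator_of_mem (Set.mem_Iio.2 h), k2,
        Set.indicator_of_mem (Set.mem_Ioi.2 h),
        show ENNReal.ofReal t * (ENNReal.ofReal (Real.log (r / t))
            * ENNReal.ofReal (r ^ 2)⁻¹) * ENNReal.ofReal (t ^ (-θ - 1))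
          = ENNReal.ofReal (r ^ 2)⁻¹ * (ENNReal.ofReal (t ^ (1:ℝ))
            * ENNReal.ofReal (t ^ (-θ - 1)) * ENNReal.ofReal (Real.log (r / t))) by
            rw [Real.rpow_one]; ring,
        oR_mul_rpow ht0, show (1:ℝ) + (-θ - 1) = (1 - θ) - 1 by ring]
    · rw [Set.indicator_of_notMem (by simpa using h), k2,
        Set.indicator_of_notMem (by simpa using h), zero_mul]
  have hm : Measurable fun t : ℝ =>
      ENNReal.ofReal (t ^ ((1 - θ) - 1)) * ENNReal.ofReal (Real.log (r / t)) :=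
    (meas_rpow_oR _).mul ((Real.measurable_log.comp (measurable_const.div measurable_id)).ennreal_ofReal)
  rw [setLIntegral_congr_fun_ae measurableSet_Ioi e, lintegral_indicator measurableSet_Iio,
    Measure.restrict_restrict measurableSet_Iio, Set.Iio_inter_Ioi,
    lintegral_const_mul _ hm, int_A (by linarith : (0:ℝ) < 1 - θ) hr0, div_eq_mul_inv,
    ENNReal.ofReal_mul (Real.rpow_nonneg hr0.le _), ← mul_assoc, oR_sq_inv hr0,
    oR_mul_rpow hr0, show (-2:ℝ) + (1 - θ) = -θ - 1 by ring]

/-- Iterated (logarithmic) Hardy inequalities: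
`Φ_{θ,q}(∫₀ᵗ g(r) log(t/r) dr/r) ≤ θ⁻² Φ_{θ,q}(g)`,
`Φ_{θ,q}(t ∫ₜ^∞ g(r) log(r/t) dr/r²) ≤ (1−θ)⁻² Φ_{θ,q}(g)`, and the combined estimate. -/
theorem iterated_hardy_inequalities (θ : ℝ) (q : ℝ≥0∞) (hθ0 : 0 < θ) (hθ1 : θ < 1)
    (hq : 1 ≤ q) (g : ℝ → ℝ≥0∞) (hg : Measurable g) :
    Phi θ q (fun t => ∫⁻ r in Ioo (0 : ℝ) t,
        g r * ENNReal.ofReal (Real.log (t / r)) * ENNReal.ofReal r⁻¹) ≤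
      ENNReal.ofReal (θ ^ 2)⁻¹ * Phi θ q g ∧
    Phi θ q (fun t => ENNReal.ofReal t *
        ∫⁻ r in Ioi t, g r * ENNReal.ofReal (Real.log (r / t)) * ENNReal.ofReal (r ^ 2)⁻¹) ≤
      ENNReal.ofReal ((1 - θ) ^ 2)⁻¹ * Phi θ q g ∧
    Phi θ q (fun t =>
        (∫⁻ r in Ioo (0 : ℝ) t,
          g r * ENNReal.ofReal (Real.log (t / r)) * ENNReal.ofReal r⁻¹) +
        ENNReal.ofReal t *
          ∫⁻ r in Ioi t, g r * ENNReal.ofReal (Real.log (r / t)) * ENNReal.ofReal (r ^ 2)⁻¹) ≤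
      ENNReal.ofReal ((θ ^ 2)⁻¹ + ((1 - θ) ^ 2)⁻¹) * Phi θ q g := by
  have e1 : ∀ t ∈ Ioi (0:ℝ), (∫⁻ r in Ioi (0:ℝ), k1 t r * g r)
      = ∫⁻ r in Ioo (0:ℝ) t,
          g r * ENNReal.ofReal (Real.log (t / r)) * ENNReal.ofReal r⁻¹ := by
    intro t _
    rw [k1_apply]
    exact lintegral_congr fun r => by ring
  have e2 : ∀ t ∈ Ioi (0:ℝ), (∫⁻ r in Ioi (0:ℝ), k2 t r * g r)
      = ENNReal.ofReal t * ∫⁻ r in Ioi t,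
          g r * ENNReal.ofReal (Real.log (r / t)) * ENNReal.ofReal (r ^ 2)⁻¹ := by
    intro t ht
    rw [k2_apply ht]
    have e : ∀ r : ℝ, ENNReal.ofReal t * (ENNReal.ofReal (Real.log (r / t))
        * ENNReal.ofReal (r ^ 2)⁻¹) * g r
        = ENNReal.ofReal t * (g r * ENNReal.ofReal (Real.log (r / t))
          * ENNReal.ofReal (r ^ 2)⁻¹) := fun r => by ring
    simp_rw [e]
    have hm : Measurable fun r : ℝ =>
        g r * ENNReal.ofReal (Real.log (r / t)) * ENNReal.ofReal (r ^ 2)⁻¹ :=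
      (hg.mul ((Real.measurable_log.comp
        (measurable_id.div_const t)).ennreal_ofReal)).mul
          ((measurable_id.pow_const 2).inv.ennreal_ofReal)
    rw [lintegral_const_mul _ hm]
  have hT1 := key θ q hθ0 hq hg k1_meas ((θ ^ 2)⁻¹) (H1k1 hθ0) (H2k1 hθ0)
  have hT2 := key θ q hθ0 hq hg k2_meas (((1 - θ) ^ 2)⁻¹) (H1k2 hθ1) (H2k2 hθ1)
  have hksum : Measurable (Function.uncurry fun t r : ℝ => k1 t r + k2 t r) := by
    have h : Function.uncurry (fun t r : ℝ => k1 t r + k2 t r)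
        = fun z => Function.uncurry k1 z + Function.uncurry k2 z := rfl
    rw [h]; exact k1_meas.add k2_meas
  have H1sum : ∀ t ∈ Ioi (0:ℝ),
      ∫⁻ r in Ioi (0:ℝ), (k1 t r + k2 t r) * ENNReal.ofReal (r ^ θ)
      = ENNReal.ofReal (t ^ θ) * ENNReal.ofReal ((θ ^ 2)⁻¹ + ((1 - θ) ^ 2)⁻¹) := by
    intro t ht
    simp_rw [add_mul]
    rw [lintegral_add_left ((k1_meas.of_uncurry_left).fun_mul (meas_rpow_oR θ)),
      H1k1 hθ0 t ht, H1k2 hθ1 t ht, ← mul_add,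
      ← ENNReal.ofReal_add (by positivity) (by positivity)]
  have H2sum : ∀ r ∈ Ioi (0:ℝ),
      ∫⁻ t in Ioi (0:ℝ), (k1 t r + k2 t r) * ENNReal.ofReal (t ^ (-θ - 1))
      = ENNReal.ofReal (r ^ (-θ - 1)) * ENNReal.ofReal ((θ ^ 2)⁻¹ + ((1 - θ) ^ 2)⁻¹) := by
    intro r hr
    simp_rw [add_mul]
    rw [lintegral_add_left ((k1_meas.of_uncurry_right).fun_mul (meas_rpow_oR _)),
      H2k1 hθ0 r hr, H2k2 hθ1 r hr, ← mul_add,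
      ← ENNReal.ofReal_add (by positivity) (by positivity)]
  have hT3 := key θ q hθ0 hq hg hksum ((θ ^ 2)⁻¹ + ((1 - θ) ^ 2)⁻¹) H1sum H2sum
  refine ⟨?_, ?_, ?_⟩
  · rw [← Phi_congr e1]; exact hT1
  · rw [← Phi_congr e2]; exact hT2
  · have e3 : ∀ t ∈ Ioi (0:ℝ), (∫⁻ r in Ioi (0:ℝ), (k1 t r + k2 t r) * g r)
        = (∫⁻ r in Ioo (0:ℝ) t,
            g r * ENNReal.ofReal (Real.log (t / r)) * ENNReal.ofReal r⁻¹)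
          + ENNReal.ofReal t * ∫⁻ r in Ioi t,
              g r * ENNReal.ofReal (Real.log (r / t)) * ENNReal.ofReal (r ^ 2)⁻¹ := by
      intro t ht
      simp_rw [add_mul]
      rw [lintegral_add_left ((k1_meas.of_uncurry_left).fun_mul hg), e1 t ht, e2 t ht]
    rw [← Phi_congr e3]; exact hT3
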